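/- Let 0 < δ < 1, let v = (1−δ) Σ_{t=0}^∞ δ^t v(0) M^t be the discounted mean distribution of the full chain, and let μ = (1−δ) Σ_{t=0}^∞ δ^t μ(0) (M')^t be the discounted mean distribution of the reduced chain. Then for every A ∈ {C,D}, x ∈ {0,…,k} and y ∈ {0,…,n−1−k}: μ_{(A,x,y)} = Σ_{h ∈ A_{Axy}} v_h. -/

import Mathlib

open Finset Matrix
open scoped Classical

noncomputable section

/-- A memory-1 strategy: an initial cooperation probability `init` and conditional
cooperation probabilities `cond A j`: the probability to cooperate in the next round
when one's own action in the current round was `A` (`true` = cooperate) and exactly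
`j` co-players cooperated. -/
structure Mem1 where
  init : ℝ
  cond : Bool → ℕ → ℝ

/-- All entries of the strategy lie in `[0,1]`. -/
def Mem1.valid (p : Mem1) : Prop :=
  p.init ∈ Set.Icc (0:ℝ) 1 ∧ ∀ A j, p.cond A j ∈ Set.Icc (0:ℝ) 1

/-- A full state: the action of each of the `n` players (`true` = cooperate). -/
abbrev FullState (n : ℕ) := Fin n → Bool

/-- The number of cooperators `σ(h)` in a full state. -/
def nCoop {n : ℕ} (h : FullState n) : ℕ :=
  (Finset.univ.filter fun i => h i = true).card

/-- The full transition matrix `M` on the `2^n` full states, given each player's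
memory-1 strategy: `m_{h,h'} = ∏ i u_i`, where `u_i` is player `i`'s probability of
choosing action `h' i` given that in state `h` his action was `h i` and
`σ(h) - f(h i)` of his co-players cooperated. -/
def fullM {n : ℕ} (strat : Fin n → Mem1) : Matrix (FullState n) (FullState n) ℝ :=
  Matrix.of fun h h' => ∏ i,
    (if h' i then (strat i).cond (h i) (nCoop h - if h i then 1 else 0)
     else 1 - (strat i).cond (h i) (nCoop h - if h i then 1 else 0))

/-- The initial full-state distribution `v(0)`: each player cooperates independently
with the initial probability of his own strategy, `v(0)_h = ∏ i |1 - f(A_i) - p^i_0|`. -/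
def fullInit {n : ℕ} (strat : Fin n → Mem1) : FullState n → ℝ :=
  fun h => ∏ i, |1 - (if h i then (1:ℝ) else 0) - (strat i).init|

/-- Binomial transfer factor: for a block of `tot` co-players of one strategy of which
`x` cooperated in the last round, the probability that exactly `x'` of them cooperate
in the next round, where previous cooperators cooperate with probability `pc` and
previous defectors with probability `pd`:
`Σ_{j=0}^{x'} C(x,j) pc^j (1-pc)^{x-j} C(tot-x, x'-j) pd^{x'-j} (1-pd)^{(tot-x)-(x'-j)}`. -/
def transfer (pc pd : ℝ) (x tot x' : ℕ) : ℝ :=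
  ∑ j ∈ Finset.range (x' + 1),
    (x.choose j : ℝ) * pc ^ j * (1 - pc) ^ (x - j) *
    ((tot - x).choose (x' - j) : ℝ) * pd ^ (x' - j) * (1 - pd) ^ ((tot - x) - (x' - j))

/-- The discounted mean distribution `(1-δ) Σ_{t=0}^∞ δ^t (w₀ T^t)`. -/
def discMean {α : Type*} [Fintype α] [DecidableEq α]
    (δ : ℝ) (w0 : α → ℝ) (T : Matrix α α ℝ) : α → ℝ :=
  fun j => (1 - δ) * ∑' t : ℕ, δ ^ t * (w0 ᵥ* T ^ t) j

/-- The focal player's one-round payoff in full state `h`: `a_{σ(h)-1}` if he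
cooperates, `b_{σ(h)}` if he defects. -/
def focalPayoff {n : ℕ} (focal : Fin n) (a b : ℕ → ℝ) (h : FullState n) : ℝ :=
  if h focal then a (nCoop h - 1) else b (nCoop h)

/-- Strategy assignment for two strategies: `assign i = true` means player `i` uses `p`,
otherwise player `i` uses `q`. -/
def strat2 {n : ℕ} (p q : Mem1) (assign : Fin n → Bool) : Fin n → Mem1 :=
  fun i => if assign i then p else q

/-- The cluster `A_{Axy}`: full states in which the focal player plays `A`, exactly `x`
of the `p`-co-players cooperate, and exactly `y` of the `q`-co-players cooperate. -/
def cluster {n : ℕ} (focal : Fin n) (assign : Fin n → Bool) (A : Bool) (x y : ℕ) :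
    Finset (FullState n) :=
  Finset.univ.filter fun h =>
    h focal = A ∧
    (Finset.univ.filter fun i => i ≠ focal ∧ assign i = true ∧ h i = true).card = x ∧
    (Finset.univ.filter fun i => i ≠ focal ∧ assign i = false ∧ h i = true).card = y

/-- The reduced transition matrix `M'` on the `2(k+1)(n-k)` clustered states `(A,x,y)`
with `A ∈ {C,D}`, `x ∈ {0,…,k}`, `y ∈ {0,…,n-1-k}`, for a focal player using `p`. -/
def redM (n k : ℕ) (p q : Mem1) :
    Matrix (Bool × Fin (k+1) × Fin (n-k)) (Bool × Fin (k+1) × Fin (n-k)) ℝ :=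
  Matrix.of fun s s' =>
    match s, s' with
    | (A, x, y), (A', x', y') =>
      |1 - (if A' then (1:ℝ) else 0) - p.cond A ((x:ℕ) + (y:ℕ))| *
      transfer (p.cond true ((x:ℕ) + (y:ℕ) + (if A then 1 else 0) - 1))
               (p.cond false ((x:ℕ) + (y:ℕ) + (if A then 1 else 0))) (x:ℕ) k (x':ℕ) *
      transfer (q.cond true ((x:ℕ) + (y:ℕ) + (if A then 1 else 0) - 1))
               (q.cond false ((x:ℕ) + (y:ℕ) + (if A then 1 else 0))) (y:ℕ) (n-1-k) (y':ℕ)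

/-- The initial clustered distribution `μ(0)`. -/
def redInit (n k : ℕ) (p q : Mem1) : Bool × Fin (k+1) × Fin (n-k) → ℝ :=
  fun s => match s with
  | (A, x, y) =>
    |1 - (if A then (1:ℝ) else 0) - p.init| *
    ((k.choose (x:ℕ) : ℝ) * p.init ^ (x:ℕ) * (1 - p.init) ^ (k - (x:ℕ))) *
    (((n-1-k).choose (y:ℕ) : ℝ) * q.init ^ (y:ℕ) * (1 - q.init) ^ ((n-1-k) - (y:ℕ)))



lemma sum_pi_bool {ι : Type*} [Fintype ι] [DecidableEq ι] (g : ι → Bool → ℝ) :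
    ∑ f : ι → Bool, ∏ i, g i (f i) = ∏ i, (g i true + g i false) := by
  have := Finset.prod_univ_sum (fun _ : ι => (univ : Finset Bool)) (fun i b => g i b)
  rw [Fintype.piFinset_univ] at this
  rw [← this]
  exact Finset.prod_congr rfl fun i _ => by simp [add_comm]

lemma card_filter_subtype {ι : Type*} [Fintype ι] (p : ι → Prop) (r : ι → Prop)
    [DecidablePred p] [DecidablePred (fun i => p i ∧ r i)]
    [DecidablePred (fun j : {i // p i} => r j.1)] :
    (univ.filter fun i => p i ∧ r i).card
      = (univ.filter fun j : {i // p i} => r j.1).card := by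
  refine (Finset.card_bij (fun (j : {i // p i}) _ => j.1) ?_ ?_ ?_).symm
  · intro j hj
    simp only [mem_filter, mem_univ, true_and] at hj ⊢
    exact ⟨j.2, hj⟩
  · intro j1 _ j2 _ hj; exact Subtype.ext hj
  · intro i hi
    simp only [mem_filter, mem_univ, true_and] at hi
    exact ⟨⟨i, hi.1⟩, by simp [hi.2], rfl⟩

lemma sum_split {ι : Type*} [Fintype ι] (p : ι → Prop) [DecidablePred p] (g : ι → Bool → ℝ)
    (Φ : ({i // p i} → Bool) → Prop) (Ψ : ({i // ¬ p i} → Bool) → Prop)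
    [DecidablePred Φ] [DecidablePred Ψ]
    (S : Finset (ι → Bool))
    (hS : ∀ f, f ∈ S ↔ Φ (fun j => f j.1) ∧ Ψ (fun j => f j.1)) :
    ∑ f ∈ S, ∏ i, g i (f i)
      = (∑ f1 ∈ univ.filter Φ, ∏ j : {i // p i}, g j.1 (f1 j))
        * (∑ f2 ∈ univ.filter Ψ, ∏ j : {i // ¬ p i}, g j.1 (f2 j)) := by
  classical
  have h0 : ∑ f ∈ S, ∏ i, g i (f i)
      = ∑ f : ι → Bool, if Φ (fun j => f j.1) ∧ Ψ (fun j => f j.1)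
          then ∏ i, g i (f i) else 0 := by
    rw [← Finset.sum_filter]
    apply Finset.sum_congr _ (fun f _ => rfl)
    ext f; simp [hS f]
  rw [h0, Finset.sum_filter, Finset.sum_filter, Finset.sum_mul_sum]
  let e := Equiv.piEquivPiSubtypeProd p (fun _ => Bool)
  rw [← Equiv.sum_comp e.symm (fun f : ι → Bool =>
    if Φ (fun j => f j.1) ∧ Ψ (fun j => f j.1) then ∏ i, g i (f i) else 0)]
  rw [Fintype.sum_prod_type]
  refine Finset.sum_congr rfl fun f1 _ => Finset.sum_congr rfl fun f2 _ => ?_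
  have hres1 : (fun j : {i // p i} => e.symm (f1, f2) j.1) = f1 := by
    funext j; simp [e, Equiv.piEquivPiSubtypeProd, j.2]
  have hres2 : (fun j : {i // ¬ p i} => e.symm (f1, f2) j.1) = f2 := by
    funext j; simp [e, Equiv.piEquivPiSubtypeProd, j.2]
  have hprod : ∏ i, g i (e.symm (f1, f2) i)
      = (∏ j : {i // p i}, g j.1 (f1 j)) * (∏ j : {i // ¬ p i}, g j.1 (f2 j)) := by
    rw [← Fintype.prod_subtype_mul_prod_subtype p (fun i => g i (e.symm (f1, f2) i))]
    congr 1
    · exact Finset.prod_congr rfl fun j _ => congrArg _ (congrFun hres1 j)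
    · exact Finset.prod_congr rfl fun j _ => congrArg _ (congrFun hres2 j)
  simp only [hres1, hres2, hprod]
  by_cases h1 : Φ f1 <;> by_cases h2 : Ψ f2 <;> simp [h1, h2]

lemma card_count {ι : Type*} [Fintype ι] (j : ℕ) :
    (univ.filter fun f : ι → Bool => (univ.filter fun i => f i = true).card = j).card
      = (Fintype.card ι).choose j := by
  classical
  rw [← Finset.card_univ, ← Finset.card_powersetCard j (univ : Finset ι)]
  apply Finset.card_nbij' (fun f => univ.filter fun i => f i = true)
    (fun s => fun i => decide (i ∈ s))
  · intro f hf
    simp only [Finset.mem_coe, mem_filter, mem_univ, true_and] at hf ⊢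
    simp [Finset.mem_powersetCard, hf]
  · intro s hs
    simp only [Finset.mem_coe, Finset.mem_powersetCard] at hs
    simp only [Finset.mem_coe, mem_filter, mem_univ, true_and]
    rw [← hs.2]; congr 1; ext i; simp
  · intro f hf; funext i; simp
  · intro s hs; ext i; simp

lemma sum_count {ι : Type*} [Fintype ι] (a b : ℝ) (j : ℕ) :
    ∑ f ∈ univ.filter (fun f : ι → Bool => (univ.filter fun i => f i = true).card = j),
      ∏ i, (if f i then a else b)
      = ((Fintype.card ι).choose j : ℝ) * a ^ j * b ^ (Fintype.card ι - j) := by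
  have key : ∀ f ∈ univ.filter (fun f : ι → Bool => (univ.filter fun i => f i = true).card = j),
      (∏ i, (if f i then a else b)) = a ^ j * b ^ (Fintype.card ι - j) := by
    intro f hf
    simp only [mem_filter, mem_univ, true_and] at hf
    rw [← Finset.prod_filter_mul_prod_filter_not univ (fun i => f i = true)]
    have h1 : ∏ i ∈ univ.filter (fun i => f i = true), (if f i then a else b)
        = ∏ _i ∈ univ.filter (fun i => f i = true), a :=
      Finset.prod_congr rfl (fun i hi => by simp only [mem_filter] at hi; simp [hi.2])
    have h2 : ∏ i ∈ univ.filter (fun i => ¬ f i = true), (if f i then a else b)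
        = ∏ _i ∈ univ.filter (fun i => ¬ f i = true), b :=
      Finset.prod_congr rfl (fun i hi => by simp only [mem_filter] at hi; simp [hi.2])
    rw [h1, h2, Finset.prod_const, Finset.prod_const, hf]
    congr 2
    have h3 := Finset.card_filter_add_card_filter_not (s := (univ : Finset ι))
      (fun i => f i = true)
    rw [Finset.card_univ] at h3
    omega
  rw [Finset.sum_congr rfl key, Finset.sum_const, card_count, nsmul_eq_mul]
  ring

/-- one-group version with general `g`, set-parametrized -/
lemma sum_count' {ι : Type*} [Fintype ι] (a b : ℝ) (j : ℕ)
    (g : ι → Bool → ℝ) (hg : ∀ i b', g i b' = if b' then a else b)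
    (S : Finset (ι → Bool))
    (hS : ∀ f, f ∈ S ↔ (univ.filter fun i => f i = true).card = j) :
    ∑ f ∈ S, ∏ i, g i (f i)
      = ((Fintype.card ι).choose j : ℝ) * a ^ j * b ^ (Fintype.card ι - j) := by
  have h1 : S = univ.filter (fun f : ι → Bool => (univ.filter fun i => f i = true).card = j) := by
    ext f; simp [hS f]
  rw [h1, ← sum_count a b j]
  exact Finset.sum_congr rfl fun f _ => Finset.prod_congr rfl fun i _ => hg i (f i)

set_option maxHeartbeats 2000000 in
lemma sum_two_rates {ι : Type*} [Fintype ι] (c : ι → Bool) (pc pd : ℝ) (x' : ℕ)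
    (g : ι → Bool → ℝ)
    (hg : ∀ i b, g i b = if b then (if c i then pc else pd) else (1 - if c i then pc else pd))
    (S : Finset (ι → Bool))
    (hS : ∀ f, f ∈ S ↔ (univ.filter fun i => f i = true).card = x') :
    ∑ f ∈ S, ∏ i, g i (f i)
    = transfer pc pd ((univ.filter fun i => c i = true).card) (Fintype.card ι) x' := by
  classical
  set x := (univ.filter fun i => c i = true).card with hx
  have hadd : ∀ f : ι → Bool,
      (univ.filter fun i => c i = true ∧ f i = true).card
        + (univ.filter fun i => ¬ (c i = true) ∧ f i = true).card
        = (univ.filter fun i => f i = true).card := by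
    intro f
    have h := Finset.card_filter_add_card_filter_not
      (s := univ.filter fun i => f i = true) (fun i => c i = true)
    rw [Finset.filter_filter, Finset.filter_filter] at h
    rw [show (univ.filter fun i => c i = true ∧ f i = true)
        = univ.filter fun i => f i = true ∧ c i = true by ext i; simp [and_comm]]
    rw [show (univ.filter fun i => ¬ (c i = true) ∧ f i = true)
        = univ.filter fun i => f i = true ∧ ¬ (c i = true) by ext i; simp [and_comm]]
    exact h
  rw [← Finset.sum_fiberwise_of_maps_to (t := Finset.range (x' + 1))
    (g := fun f : ι → Bool => (univ.filter fun i => c i = true ∧ f i = true).card)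
    (fun f hf => by
      rw [hS f] at hf
      have hle : (univ.filter fun i => c i = true ∧ f i = true).card
          ≤ (univ.filter fun i => f i = true).card :=
        Finset.card_le_card (fun i hi => by
          simp only [mem_filter] at hi ⊢; exact ⟨hi.1, hi.2.2⟩)
      simp only [Finset.mem_range]; omega)
    (fun f => ∏ i, g i (f i))]
  unfold transfer
  refine Finset.sum_congr rfl fun j hj => ?_
  simp only [Finset.mem_range] at hj
  refine Eq.trans (sum_split (fun i => c i = true) g
    (fun f1 : {i // c i = true} → Bool => (univ.filter fun jj => f1 jj = true).card = j)
    (fun f2 : {i // ¬ (c i = true)} → Bool => (univ.filter fun jj => f2 jj = true).card = x' - j)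
    _ (fun f => ?_)) ?_
  · simp only [Finset.mem_filter, hS f]
    have hc1 := card_filter_subtype (fun i => c i = true) (fun i => f i = true)
    have hc2 := card_filter_subtype (fun i => ¬ (c i = true)) (fun i => f i = true)
    have := hadd f
    constructor
    · rintro ⟨h1, h2⟩
      constructor
      · rw [← hc1]; omega
      · rw [← hc2]; omega
    · rintro ⟨h1, h2⟩
      rw [← hc1] at h1; rw [← hc2] at h2
      omega
  · beta_reduce
    have e1 : (∑ f1 ∈ univ.filter (fun f1 : {i // c i = true} → Bool =>
          (univ.filter fun jj => f1 jj = true).card = j),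
        ∏ jj : {i // c i = true}, g jj.1 (f1 jj))
        = ((Fintype.card {i // c i = true}).choose j : ℝ) * pc ^ j
            * (1 - pc) ^ (Fintype.card {i // c i = true} - j) :=
      sum_count' pc (1 - pc) j
      (fun (jj : {i // c i = true}) b => g jj.1 b)
      (fun jj b => by
        show g jj.1 b = _
        rw [hg jj.1 b]; have h2 : c jj.1 = true := jj.2; rw [h2]; simp)
      _ (fun f1 => by simp)
    have hcard2 : Fintype.card {i // ¬ (c i = true)} = Fintype.card ι - x := by
      rw [Fintype.card_subtype]
      have h := Finset.card_filter_add_card_filter_not (s := (univ : Finset ι))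
        (fun i => c i = true)
      rw [Finset.card_univ] at h
      omega
    have e2 : (∑ f2 ∈ univ.filter (fun f2 : {i // ¬ (c i = true)} → Bool =>
          (univ.filter fun jj => f2 jj = true).card = x' - j),
        ∏ jj : {i // ¬ (c i = true)}, g jj.1 (f2 jj))
        = ((Fintype.card {i // ¬ (c i = true)}).choose (x' - j) : ℝ) * pd ^ (x' - j)
            * (1 - pd) ^ (Fintype.card {i // ¬ (c i = true)} - (x' - j)) :=
      sum_count' pd (1 - pd) (x' - j)
      (fun (jj : {i // ¬ (c i = true)}) b => g jj.1 b)
      (fun jj b => by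
        show g jj.1 b = _
        rw [hg jj.1 b]
        have h2 : c jj.1 = false := by
          have := jj.2; simpa using this
        rw [h2]; simp)
      _ (fun f2 => by simp)
    refine Eq.trans (congrArg₂ (· * ·) e1 e2) ?_
    rw [hcard2, Fintype.card_subtype, ← hx]
    ring

lemma sum_point {ι : Type*} [Fintype ι] (i0 : ι) (huniq : ∀ i : ι, i = i0)
    (g : ι → Bool → ℝ) (A : Bool) (S : Finset (ι → Bool))
    (hS : ∀ f, f ∈ S ↔ f i0 = A) :
    ∑ f ∈ S, ∏ i, g i (f i) = g i0 A := by
  have hU : (univ : Finset ι) = {i0} := by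
    ext i; simp [huniq i]
  have hSe : S = {fun _ => A} := by
    ext f
    rw [hS, Finset.mem_singleton]
    constructor
    · intro hf; funext i; rw [huniq i]; exact hf
    · intro hf; rw [hf]
  rw [hSe, Finset.sum_singleton]
  rw [show (∏ i, g i A) = ∏ i ∈ ({i0} : Finset ι), g i A by rw [← hU]]
  rw [Finset.prod_singleton]


lemma abs_fac {c : ℝ} (h0 : 0 ≤ c) (h1 : c ≤ 1) (A' : Bool) :
    |1 - (if A' then (1:ℝ) else 0) - c| = if A' then c else 1 - c := by
  cases A'
  · have : (1:ℝ) - (if false then (1:ℝ) else 0) - c = 1 - c := by simp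
    rw [this, abs_of_nonneg (by linarith)]
    simp
  · have : (1:ℝ) - (if true then (1:ℝ) else 0) - c = -c := by simp
    rw [this, abs_neg, abs_of_nonneg h0]
    simp

lemma cardQ (n k : ℕ) (focal : Fin n) (assign : Fin n → Bool)
    (hcard : (univ.filter fun i => i ≠ focal ∧ assign i = true).card = k) :
    (univ.filter fun i => i ≠ focal ∧ assign i = false).card = n - 1 - k := by
  classical
  have h1 : (univ.filter fun i : Fin n => i ≠ focal).card = n - 1 := by
    rw [Finset.filter_ne' univ focal, Finset.card_erase_of_mem (mem_univ _),
      Finset.card_univ, Fintype.card_fin]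
  have h2 := Finset.card_filter_add_card_filter_not
    (s := univ.filter fun i : Fin n => i ≠ focal) (fun i => assign i = true)
  rw [Finset.filter_filter, Finset.filter_filter] at h2
  have e2 : (univ.filter fun i : Fin n => i ≠ focal ∧ assign i = false)
      = univ.filter fun i : Fin n => i ≠ focal ∧ ¬ assign i = true := by
    ext i; simp
  rw [e2]
  omega

set_option maxHeartbeats 2000000 in
lemma lump (n k : ℕ) (p q : Mem1) (hp : p.valid) (hq : q.valid)
    (focal : Fin n) (assign : Fin n → Bool) (hassign : assign focal = true)
    (hcard : (univ.filter fun i => i ≠ focal ∧ assign i = true).card = k)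
    (A : Bool) (x y : ℕ) (h : FullState n) (hh : h ∈ cluster focal assign A x y)
    (A' : Bool) (x' y' : ℕ) :
    ∑ h' ∈ cluster focal assign A' x' y', fullM (strat2 p q assign) h h'
      = |1 - (if A' then (1:ℝ) else 0) - p.cond A (x + y)| *
        transfer (p.cond true (x + y + (if A then 1 else 0) - 1))
                 (p.cond false (x + y + (if A then 1 else 0))) x k x' *
        transfer (q.cond true (x + y + (if A then 1 else 0) - 1))
                 (q.cond false (x + y + (if A then 1 else 0))) y (n-1-k) y' := by
  classical
  simp only [cluster, mem_filter, mem_univ, true_and] at hh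
  obtain ⟨hfA, hx, hy⟩ := hh
  set strat := strat2 p q assign with hstrat
  set g : Fin n → Bool → ℝ := fun i b =>
    if b then (strat i).cond (h i) (nCoop h - if h i then 1 else 0)
    else 1 - (strat i).cond (h i) (nCoop h - if h i then 1 else 0) with hgdef
  -- σ(h) = x + y + f(A)
  have hsig : nCoop h = x + y + (if A then 1 else 0) := by
    unfold nCoop
    have s1 := Finset.card_filter_add_card_filter_not
      (s := univ.filter fun i : Fin n => h i = true) (fun i => i = focal)
    rw [Finset.filter_filter, Finset.filter_filter] at s1
    have e1 : (univ.filter fun i : Fin n => h i = true ∧ i = focal).card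
        = (if A then 1 else 0) := by
      cases hA : A
      · rw [hA] at hfA
        rw [show (univ.filter fun i : Fin n => h i = true ∧ i = focal) = ∅ by
          ext i; simp only [mem_filter, mem_univ, true_and, Finset.notMem_empty, iff_false]
          rintro ⟨hi, rfl⟩; rw [hfA] at hi; exact Bool.false_ne_true hi]
        simp
      · rw [hA] at hfA
        rw [show (univ.filter fun i : Fin n => h i = true ∧ i = focal) = {focal} by
          ext i; simp only [mem_filter, mem_univ, true_and, Finset.mem_singleton]
          constructor
          · rintro ⟨_, rfl⟩; rfl
          · rintro rfl; exact ⟨hfA, rfl⟩]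
        simp
    have s2 := Finset.card_filter_add_card_filter_not
      (s := univ.filter fun i : Fin n => h i = true ∧ ¬ i = focal) (fun i => assign i = true)
    rw [Finset.filter_filter, Finset.filter_filter] at s2
    have e2 : (univ.filter fun i : Fin n => (h i = true ∧ ¬ i = focal) ∧ assign i = true)
        = univ.filter fun i : Fin n => i ≠ focal ∧ assign i = true ∧ h i = true := by
      ext i; simp only [mem_filter, mem_univ, true_and]; tauto
    have e3 : (univ.filter fun i : Fin n => (h i = true ∧ ¬ i = focal) ∧ ¬ assign i = true)
        = univ.filter fun i : Fin n => i ≠ focal ∧ assign i = false ∧ h i = true := by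
      ext i; simp only [mem_filter, mem_univ, true_and, Bool.not_eq_true]; tauto
    rw [e2, e3, hx, hy] at s2
    omega
  -- rewrite the matrix entries
  have hMrw : ∀ h' : FullState n, fullM strat h h' = ∏ i, g i (h' i) := fun h' => rfl
  refine Eq.trans (Finset.sum_congr rfl (fun h' _ => hMrw h')) ?_
  -- first split: focal vs rest
  refine Eq.trans (sum_split (fun i : Fin n => i = focal) g
    (fun f1 : {i : Fin n // i = focal} → Bool => f1 ⟨focal, rfl⟩ = A')
    (fun f2 : {i : Fin n // ¬ i = focal} → Bool =>
      (univ.filter fun jj => assign jj.1 = true ∧ f2 jj = true).card = x'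
      ∧ (univ.filter fun jj => assign jj.1 = false ∧ f2 jj = true).card = y')
    (cluster focal assign A' x' y') (fun f => ?_)) ?_
  · -- membership
    simp only [cluster, mem_filter, mem_univ, true_and]
    have c1 : (univ.filter fun i : Fin n => i ≠ focal ∧ assign i = true ∧ f i = true).card
        = (univ.filter fun jj : {i : Fin n // ¬ i = focal} =>
            assign jj.1 = true ∧ f jj.1 = true).card :=
      card_filter_subtype (fun i : Fin n => ¬ i = focal)
        (fun i => assign i = true ∧ f i = true)
    have c2 : (univ.filter fun i : Fin n => i ≠ focal ∧ assign i = false ∧ f i = true).card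
        = (univ.filter fun jj : {i : Fin n // ¬ i = focal} =>
            assign jj.1 = false ∧ f jj.1 = true).card :=
      card_filter_subtype (fun i : Fin n => ¬ i = focal)
        (fun i => assign i = false ∧ f i = true)
    rw [c1, c2]
  · -- evaluate the three factors
    refine Eq.trans (congrArg₂ (· * ·)
      (@sum_point {i : Fin n // i = focal} (Subtype.fintype fun i : Fin n => i = focal)
        (⟨focal, rfl⟩ : {i : Fin n // i = focal}) (by rintro ⟨i, rfl⟩; rfl)
        (fun jj b => g jj.1 b) A' _ ?_)
      (Eq.trans (sum_split (fun jj : {i : Fin n // ¬ i = focal} => assign jj.1 = true)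
          (fun jj b => g jj.1 b)
          (fun u : {jj : {i : Fin n // ¬ i = focal} // assign jj.1 = true} → Bool =>
            (univ.filter fun w => u w = true).card = x')
          (fun u : {jj : {i : Fin n // ¬ i = focal} // ¬ assign jj.1 = true} → Bool =>
            (univ.filter fun w => u w = true).card = y')
          _ (fun f2 => ?_))
        (congrArg₂ (· * ·)
          (sum_two_rates
            (fun w : {jj : {i : Fin n // ¬ i = focal} // assign jj.1 = true} => h w.1.1)
            (p.cond true (x + y + (if A then 1 else 0) - 1))
            (p.cond false (x + y + (if A then 1 else 0)))
            x' (fun w b => g w.1.1 b) (fun w b => ?_) _ (fun u => ?_))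
          (sum_two_rates
            (fun w : {jj : {i : Fin n // ¬ i = focal} // ¬ assign jj.1 = true} => h w.1.1)
            (q.cond true (x + y + (if A then 1 else 0) - 1))
            (q.cond false (x + y + (if A then 1 else 0)))
            y' (fun w b => g w.1.1 b) (fun w b => ?_) _ (fun u => ?_))))) ?_
    · -- membership for the point sum
      simp
    · -- membership for second split
      simp only [mem_filter, mem_univ, true_and]
      have c3 : (univ.filter fun jj : {i : Fin n // ¬ i = focal} =>
            assign jj.1 = true ∧ f2 jj = true).card
          = (univ.filter fun w : {jj : {i : Fin n // ¬ i = focal} // assign jj.1 = true} =>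
              f2 w.1 = true).card :=
        card_filter_subtype (fun jj : {i : Fin n // ¬ i = focal} => assign jj.1 = true)
          (fun jj => f2 jj = true)
      have c4 : (univ.filter fun jj : {i : Fin n // ¬ i = focal} =>
            ¬ assign jj.1 = true ∧ f2 jj = true).card
          = (univ.filter fun w : {jj : {i : Fin n // ¬ i = focal} // ¬ assign jj.1 = true} =>
              f2 w.1 = true).card :=
        card_filter_subtype (fun jj : {i : Fin n // ¬ i = focal} => ¬ assign jj.1 = true)
          (fun jj => f2 jj = true)
      have ee : (univ.filter fun jj : {i : Fin n // ¬ i = focal} =>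
            assign jj.1 = false ∧ f2 jj = true)
          = univ.filter fun jj : {i : Fin n // ¬ i = focal} =>
            ¬ assign jj.1 = true ∧ f2 jj = true := by
        ext jj; simp [Bool.not_eq_true]
      rw [c3, ee, c4]
    · -- hg for the p-co-players
      show g w.1.1 b = _
      have hw : assign w.1.1 = true := w.2
      have hse : strat w.1.1 = p := by simp [hstrat, strat2, hw]
      simp only [hgdef]
      rcases Bool.eq_false_or_eq_true (h w.1.1) with hb | hb <;> simp [hse, hb, hsig]
    · -- membership for the p-sum
      simp
    · -- hg for the q-co-players
      show g w.1.1 b = _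
      have hw : assign w.1.1 = false := by
        have := w.2; simpa [Bool.not_eq_true] using this
      have hse : strat w.1.1 = q := by simp [hstrat, strat2, hw]
      simp only [hgdef]
      rcases Bool.eq_false_or_eq_true (h w.1.1) with hb | hb <;> simp [hse, hb, hsig]
    · -- membership for the q-sum
      simp
    · -- final arithmetic
      have hcx : (univ.filter fun w : {jj : {i : Fin n // ¬ i = focal} // assign jj.1 = true} =>
            h w.1.1 = true).card = x := by
        have d1 : (univ.filter fun i : Fin n =>
              ¬ i = focal ∧ assign i = true ∧ h i = true).card
            = (univ.filter fun jj : {i : Fin n // ¬ i = focal} =>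
                assign jj.1 = true ∧ h jj.1 = true).card :=
          card_filter_subtype (fun i : Fin n => ¬ i = focal)
            (fun i => assign i = true ∧ h i = true)
        have d2 : (univ.filter fun jj : {i : Fin n // ¬ i = focal} =>
              assign jj.1 = true ∧ h jj.1 = true).card
            = (univ.filter fun w : {jj : {i : Fin n // ¬ i = focal} // assign jj.1 = true} =>
                h w.1.1 = true).card :=
          card_filter_subtype (fun jj : {i : Fin n // ¬ i = focal} => assign jj.1 = true)
            (fun jj => h jj.1 = true)
        rw [← d2, ← d1]; exact hx
      have hcP : Fintype.card {jj : {i : Fin n // ¬ i = focal} // assign jj.1 = true} = k := by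
        rw [Fintype.card_subtype]
        have d3 : (univ.filter fun i : Fin n => ¬ i = focal ∧ assign i = true).card
            = (univ.filter fun jj : {i : Fin n // ¬ i = focal} => assign jj.1 = true).card :=
          card_filter_subtype (fun i : Fin n => ¬ i = focal) (fun i => assign i = true)
        rw [← d3]; exact hcard
      have hcy : (univ.filter fun w : {jj : {i : Fin n // ¬ i = focal} // ¬ assign jj.1 = true} =>
            h w.1.1 = true).card = y := by
        have d1 : (univ.filter fun i : Fin n =>
              ¬ i = focal ∧ ¬ assign i = true ∧ h i = true).card
            = (univ.filter fun jj : {i : Fin n // ¬ i = focal} =>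
                ¬ assign jj.1 = true ∧ h jj.1 = true).card :=
          card_filter_subtype (fun i : Fin n => ¬ i = focal)
            (fun i => ¬ assign i = true ∧ h i = true)
        have d2 : (univ.filter fun jj : {i : Fin n // ¬ i = focal} =>
              ¬ assign jj.1 = true ∧ h jj.1 = true).card
            = (univ.filter fun w : {jj : {i : Fin n // ¬ i = focal} // ¬ assign jj.1 = true} =>
                h w.1.1 = true).card :=
          card_filter_subtype (fun jj : {i : Fin n // ¬ i = focal} => ¬ assign jj.1 = true)
            (fun jj => h jj.1 = true)
        have ee : (univ.filter fun i : Fin n => ¬ i = focal ∧ ¬ assign i = true ∧ h i = true)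
            = univ.filter fun i : Fin n => i ≠ focal ∧ assign i = false ∧ h i = true := by
          ext i; simp [Bool.not_eq_true]
        rw [← d2, ← d1, ee]; exact hy
      have hcQ : Fintype.card {jj : {i : Fin n // ¬ i = focal} // ¬ assign jj.1 = true}
          = n - 1 - k := by
        rw [Fintype.card_subtype]
        have d3 : (univ.filter fun i : Fin n => ¬ i = focal ∧ ¬ assign i = true).card
            = (univ.filter fun jj : {i : Fin n // ¬ i = focal} => ¬ assign jj.1 = true).card :=
          card_filter_subtype (fun i : Fin n => ¬ i = focal) (fun i => ¬ assign i = true)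
        have ee : (univ.filter fun i : Fin n => ¬ i = focal ∧ ¬ assign i = true)
            = univ.filter fun i : Fin n => i ≠ focal ∧ assign i = false := by
          ext i; simp [Bool.not_eq_true]
        rw [← d3, ee]
        exact cardQ n k focal assign hcard
      have hfocval : g focal A' = |1 - (if A' then (1:ℝ) else 0) - p.cond A (x + y)| := by
        have hse : strat focal = p := by simp [hstrat, strat2, hassign]
        rw [abs_fac (hp.2 A (x+y)).1 (hp.2 A (x+y)).2 A']
        simp only [hgdef, hse, hfA, hsig]
        have harith : (x + y + (if A then 1 else 0)) - (if (A = true) then 1 else 0) = x + y := by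
          cases A <;> simp
        rw [harith]
      rw [hcx, hcP, hcy, hcQ, hfocval]
      ring


set_option maxHeartbeats 2000000 in
lemma init_agg (n k : ℕ) (p q : Mem1) (hp : p.valid) (hq : q.valid)
    (focal : Fin n) (assign : Fin n → Bool) (hassign : assign focal = true)
    (hcard : (univ.filter fun i => i ≠ focal ∧ assign i = true).card = k)
    (A : Bool) (x y : ℕ) :
    ∑ h ∈ cluster focal assign A x y, fullInit (strat2 p q assign) h
      = |1 - (if A then (1:ℝ) else 0) - p.init| *
        ((k.choose x : ℝ) * p.init ^ x * (1 - p.init) ^ (k - x)) *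
        (((n-1-k).choose y : ℝ) * q.init ^ y * (1 - q.init) ^ ((n-1-k) - y)) := by
  classical
  set strat := strat2 p q assign with hstrat
  set g : Fin n → Bool → ℝ := fun i b =>
    |1 - (if b then (1:ℝ) else 0) - (strat i).init| with hgdef
  have hMrw : ∀ h : FullState n, fullInit strat h = ∏ i, g i (h i) := fun h => rfl
  refine Eq.trans (Finset.sum_congr rfl (fun h _ => hMrw h)) ?_
  refine Eq.trans (sum_split (fun i : Fin n => i = focal) g
    (fun f1 : {i : Fin n // i = focal} → Bool => f1 ⟨focal, rfl⟩ = A)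
    (fun f2 : {i : Fin n // ¬ i = focal} → Bool =>
      (univ.filter fun jj => assign jj.1 = true ∧ f2 jj = true).card = x
      ∧ (univ.filter fun jj => assign jj.1 = false ∧ f2 jj = true).card = y)
    (cluster focal assign A x y) (fun f => ?_)) ?_
  · simp only [cluster, mem_filter, mem_univ, true_and]
    have c1 : (univ.filter fun i : Fin n => i ≠ focal ∧ assign i = true ∧ f i = true).card
        = (univ.filter fun jj : {i : Fin n // ¬ i = focal} =>
            assign jj.1 = true ∧ f jj.1 = true).card :=
      card_filter_subtype (fun i : Fin n => ¬ i = focal)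
        (fun i => assign i = true ∧ f i = true)
    have c2 : (univ.filter fun i : Fin n => i ≠ focal ∧ assign i = false ∧ f i = true).card
        = (univ.filter fun jj : {i : Fin n // ¬ i = focal} =>
            assign jj.1 = false ∧ f jj.1 = true).card :=
      card_filter_subtype (fun i : Fin n => ¬ i = focal)
        (fun i => assign i = false ∧ f i = true)
    rw [c1, c2]
  · refine Eq.trans (congrArg₂ (· * ·)
      (@sum_point {i : Fin n // i = focal} (Subtype.fintype fun i : Fin n => i = focal)
        (⟨focal, rfl⟩ : {i : Fin n // i = focal}) (by rintro ⟨i, rfl⟩; rfl)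
        (fun jj b => g jj.1 b) A _ ?_)
      (Eq.trans (sum_split (fun jj : {i : Fin n // ¬ i = focal} => assign jj.1 = true)
          (fun jj b => g jj.1 b)
          (fun u : {jj : {i : Fin n // ¬ i = focal} // assign jj.1 = true} → Bool =>
            (univ.filter fun w => u w = true).card = x)
          (fun u : {jj : {i : Fin n // ¬ i = focal} // ¬ assign jj.1 = true} → Bool =>
            (univ.filter fun w => u w = true).card = y)
          _ (fun f2 => ?_))
        (congrArg₂ (· * ·)
          (sum_count' p.init (1 - p.init) x
            (fun (w : {jj : {i : Fin n // ¬ i = focal} // assign jj.1 = true}) b => g w.1.1 b)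
            (fun w b => ?_) _ (fun u => ?_))
          (sum_count' q.init (1 - q.init) y
            (fun (w : {jj : {i : Fin n // ¬ i = focal} // ¬ assign jj.1 = true}) b => g w.1.1 b)
            (fun w b => ?_) _ (fun u => ?_))))) ?_
    · simp
    · simp only [mem_filter, mem_univ, true_and]
      have c3 : (univ.filter fun jj : {i : Fin n // ¬ i = focal} =>
            assign jj.1 = true ∧ f2 jj = true).card
          = (univ.filter fun w : {jj : {i : Fin n // ¬ i = focal} // assign jj.1 = true} =>
              f2 w.1 = true).card :=
        card_filter_subtype (fun jj : {i : Fin n // ¬ i = focal} => assign jj.1 = true)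
          (fun jj => f2 jj = true)
      have c4 : (univ.filter fun jj : {i : Fin n // ¬ i = focal} =>
            ¬ assign jj.1 = true ∧ f2 jj = true).card
          = (univ.filter fun w : {jj : {i : Fin n // ¬ i = focal} // ¬ assign jj.1 = true} =>
              f2 w.1 = true).card :=
        card_filter_subtype (fun jj : {i : Fin n // ¬ i = focal} => ¬ assign jj.1 = true)
          (fun jj => f2 jj = true)
      have ee : (univ.filter fun jj : {i : Fin n // ¬ i = focal} =>
            assign jj.1 = false ∧ f2 jj = true)
          = univ.filter fun jj : {i : Fin n // ¬ i = focal} =>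
            ¬ assign jj.1 = true ∧ f2 jj = true := by
        ext jj; simp [Bool.not_eq_true]
      rw [c3, ee, c4]
    · -- hg for p-part
      show g w.1.1 b = _
      have hw : assign w.1.1 = true := w.2
      have hse : strat w.1.1 = p := by simp [hstrat, strat2, hw]
      simp only [hgdef, hse]
      exact abs_fac hp.1.1 hp.1.2 b
    · simp
    · -- hg for q-part
      show g w.1.1 b = _
      have hw : assign w.1.1 = false := by
        have := w.2; simpa [Bool.not_eq_true] using this
      have hse : strat w.1.1 = q := by simp [hstrat, strat2, hw]
      simp only [hgdef, hse]
      exact abs_fac hq.1.1 hq.1.2 b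
    · simp
    · -- final arithmetic
      have hcP : Fintype.card {jj : {i : Fin n // ¬ i = focal} // assign jj.1 = true} = k := by
        rw [Fintype.card_subtype]
        have d3 : (univ.filter fun i : Fin n => ¬ i = focal ∧ assign i = true).card
            = (univ.filter fun jj : {i : Fin n // ¬ i = focal} => assign jj.1 = true).card :=
          card_filter_subtype (fun i : Fin n => ¬ i = focal) (fun i => assign i = true)
        rw [← d3]; exact hcard
      have hcQ : Fintype.card {jj : {i : Fin n // ¬ i = focal} // ¬ assign jj.1 = true}
          = n - 1 - k := by
        rw [Fintype.card_subtype]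
        have d3 : (univ.filter fun i : Fin n => ¬ i = focal ∧ ¬ assign i = true).card
            = (univ.filter fun jj : {i : Fin n // ¬ i = focal} => ¬ assign jj.1 = true).card :=
          card_filter_subtype (fun i : Fin n => ¬ i = focal) (fun i => ¬ assign i = true)
        have ee : (univ.filter fun i : Fin n => ¬ i = focal ∧ ¬ assign i = true)
            = univ.filter fun i : Fin n => i ≠ focal ∧ assign i = false := by
          ext i; simp [Bool.not_eq_true]
        rw [← d3, ee]
        exact cardQ n k focal assign hcard
      have hfocval : g focal A = |1 - (if A then (1:ℝ) else 0) - p.init| := by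
        have hse : strat focal = p := by simp [hstrat, strat2, hassign]
        simp only [hgdef, hse]
      rw [hcP, hcQ, hfocval]
      ring



lemma cluster_bounds (n k : ℕ) (focal : Fin n) (assign : Fin n → Bool)
    (hcard : (univ.filter fun i => i ≠ focal ∧ assign i = true).card = k)
    (h : FullState n) :
    (univ.filter fun i => i ≠ focal ∧ assign i = true ∧ h i = true).card ≤ k
    ∧ (univ.filter fun i => i ≠ focal ∧ assign i = false ∧ h i = true).card ≤ n - 1 - k := by
  constructor
  · rw [← hcard]
    exact Finset.card_le_card (fun i hi => by
      simp only [mem_filter] at hi ⊢; exact ⟨hi.1, hi.2.1, hi.2.2.1⟩)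
  · rw [← cardQ n k focal assign hcard]
    exact Finset.card_le_card (fun i hi => by
      simp only [mem_filter] at hi ⊢; exact ⟨hi.1, hi.2.1, hi.2.2.1⟩)

/-- classification map -/
def classify (n k : ℕ) (hn : 2 ≤ n) (hk : k ≤ n - 1) (focal : Fin n) (assign : Fin n → Bool)
    (hcard : (univ.filter fun i => i ≠ focal ∧ assign i = true).card = k)
    (h : FullState n) : Bool × Fin (k+1) × Fin (n-k) :=
  (h focal,
   ⟨(univ.filter fun i => i ≠ focal ∧ assign i = true ∧ h i = true).card,
     by have := (cluster_bounds n k focal assign hcard h).1; omega⟩,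
   ⟨(univ.filter fun i => i ≠ focal ∧ assign i = false ∧ h i = true).card,
     by have := (cluster_bounds n k focal assign hcard h).2; omega⟩)

lemma classify_mem (n k : ℕ) (hn : 2 ≤ n) (hk : k ≤ n - 1) (focal : Fin n)
    (assign : Fin n → Bool)
    (hcard : (univ.filter fun i => i ≠ focal ∧ assign i = true).card = k)
    (h : FullState n) (s : Bool × Fin (k+1) × Fin (n-k)) :
    classify n k hn hk focal assign hcard h = s
      ↔ h ∈ cluster focal assign s.1 (s.2.1 : ℕ) (s.2.2 : ℕ) := by
  obtain ⟨A, xx, yy⟩ := s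
  simp only [classify, cluster, mem_filter, mem_univ, true_and, Prod.mk.injEq, Fin.ext_iff]

lemma sum_partition (n k : ℕ) (hn : 2 ≤ n) (hk : k ≤ n - 1) (focal : Fin n)
    (assign : Fin n → Bool)
    (hcard : (univ.filter fun i => i ≠ focal ∧ assign i = true).card = k)
    (w : FullState n → ℝ) :
    ∑ h : FullState n, w h
      = ∑ s : Bool × Fin (k+1) × Fin (n-k),
          ∑ h ∈ cluster focal assign s.1 (s.2.1 : ℕ) (s.2.2 : ℕ), w h := by
  classical
  refine (Finset.sum_fiberwise_of_maps_to (t := (univ : Finset (Bool × Fin (k+1) × Fin (n-k))))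
    (g := classify n k hn hk focal assign hcard) (fun h _ => mem_univ _) w).symm.trans ?_
  refine Finset.sum_congr rfl fun s _ => Finset.sum_congr ?_ (fun h _ => rfl)
  ext h
  simp only [mem_filter, mem_univ, true_and]
  rw [classify_mem n k hn hk focal assign hcard h s]

lemma step_aux (n k : ℕ) (hn : 2 ≤ n) (hk : k ≤ n - 1) (p q : Mem1)
    (hp : p.valid) (hq : q.valid)
    (focal : Fin n) (assign : Fin n → Bool) (hassign : assign focal = true)
    (hcard : (univ.filter fun i => i ≠ focal ∧ assign i = true).card = k)
    (v : FullState n → ℝ) (μ : Bool × Fin (k+1) × Fin (n-k) → ℝ)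
    (hagg : ∀ s : Bool × Fin (k+1) × Fin (n-k),
      μ s = ∑ h ∈ cluster focal assign s.1 (s.2.1 : ℕ) (s.2.2 : ℕ), v h)
    (s' : Bool × Fin (k+1) × Fin (n-k)) :
    (μ ᵥ* redM n k p q) s'
      = ∑ h' ∈ cluster focal assign s'.1 (s'.2.1 : ℕ) (s'.2.2 : ℕ),
          (v ᵥ* fullM (strat2 p q assign)) h' := by
  classical
  have hRHS : ∀ h' : FullState n, (v ᵥ* fullM (strat2 p q assign)) h'
      = ∑ h : FullState n, v h * fullM (strat2 p q assign) h h' := by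
    intro h'; simp [Matrix.vecMul, dotProduct]
  rw [Finset.sum_congr rfl fun h' _ => hRHS h', Finset.sum_comm]
  obtain ⟨A', x', y'⟩ := s'
  have key : ∀ h : FullState n,
      (∑ h' ∈ cluster focal assign A' (x' : ℕ) (y' : ℕ), v h * fullM (strat2 p q assign) h h')
      = v h * redM n k p q (classify n k hn hk focal assign hcard h) (A', x', y') := by
    intro h
    rw [← Finset.mul_sum]
    congr 1
    have hmem : h ∈ cluster focal assign
        (classify n k hn hk focal assign hcard h).1
        ((classify n k hn hk focal assign hcard h).2.1 : ℕ)
        ((classify n k hn hk focal assign hcard h).2.2 : ℕ) := by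
      rw [← classify_mem n k hn hk focal assign hcard h]
    exact (lump n k p q hp hq focal assign hassign hcard _ _ _ h hmem A' x' y')
  rw [Finset.sum_congr rfl fun h _ => key h]
  rw [sum_partition n k hn hk focal assign hcard
    (fun h => v h * redM n k p q (classify n k hn hk focal assign hcard h) (A', x', y'))]
  have hinner : ∀ s : Bool × Fin (k+1) × Fin (n-k),
      (∑ h ∈ cluster focal assign s.1 (s.2.1 : ℕ) (s.2.2 : ℕ),
        v h * redM n k p q (classify n k hn hk focal assign hcard h) (A', x', y'))
      = μ s * redM n k p q s (A', x', y') := by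
    intro s
    rw [hagg s, Finset.sum_mul]
    refine Finset.sum_congr rfl fun h hh => ?_
    have : classify n k hn hk focal assign hcard h = s := by
      rw [classify_mem n k hn hk focal assign hcard h s]; exact hh
    rw [this]
  rw [Finset.sum_congr rfl fun s _ => hinner s]
  rfl

lemma agg_pow (n k : ℕ) (hn : 2 ≤ n) (hk : k ≤ n - 1) (p q : Mem1)
    (hp : p.valid) (hq : q.valid)
    (focal : Fin n) (assign : Fin n → Bool) (hassign : assign focal = true)
    (hcard : (univ.filter fun i => i ≠ focal ∧ assign i = true).card = k)
    (t : ℕ) (s : Bool × Fin (k+1) × Fin (n-k)) :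
    (redInit n k p q ᵥ* (redM n k p q) ^ t) s
      = ∑ h ∈ cluster focal assign s.1 (s.2.1 : ℕ) (s.2.2 : ℕ),
          (fullInit (strat2 p q assign) ᵥ* (fullM (strat2 p q assign)) ^ t) h := by
  induction t generalizing s with
  | zero =>
    obtain ⟨A, xx, yy⟩ := s
    have hL : (redInit n k p q ᵥ* (redM n k p q) ^ 0) (A, xx, yy) = redInit n k p q (A, xx, yy) := by
      rw [pow_zero, Matrix.vecMul_one]
    have hR : ∀ h : FullState n,
        (fullInit (strat2 p q assign) ᵥ* (fullM (strat2 p q assign)) ^ 0) h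
          = fullInit (strat2 p q assign) h := by
      intro h; rw [pow_zero, Matrix.vecMul_one]
    rw [hL, Finset.sum_congr rfl fun h _ => hR h]
    rw [init_agg n k p q hp hq focal assign hassign hcard A (xx : ℕ) (yy : ℕ)]
    rfl
  | succ t ih =>
    rw [pow_succ, pow_succ, ← Matrix.vecMul_vecMul, ← Matrix.vecMul_vecMul]
    exact step_aux n k hn hk p q hp hq focal assign hassign hcard _ _ (fun s0 => ih s0) s

lemma fullM_nonneg (n : ℕ) (strat : Fin n → Mem1) (hv : ∀ i, (strat i).valid)
    (h h' : FullState n) : 0 ≤ fullM strat h h' := by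
  have hrw : fullM strat h h'
      = ∏ i, (if h' i then (strat i).cond (h i) (nCoop h - if h i then 1 else 0)
          else 1 - (strat i).cond (h i) (nCoop h - if h i then 1 else 0)) := rfl
  rw [hrw]
  refine Finset.prod_nonneg fun i _ => ?_
  have h1 := (hv i).2 (h i) (nCoop h - if h i then 1 else 0)
  simp only [Set.mem_Icc] at h1
  rcases Bool.eq_false_or_eq_true (h' i) with hb | hb <;> simp [hb] <;>
    linarith [h1.1, h1.2]

lemma fullM_rowsum (n : ℕ) (strat : Fin n → Mem1) (h : FullState n) :
    ∑ h' : FullState n, fullM strat h h' = 1 := by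
  have hrw : ∀ h' : FullState n, fullM strat h h'
      = ∏ i, (fun i b => if b then (strat i).cond (h i) (nCoop h - if h i then 1 else 0)
          else 1 - (strat i).cond (h i) (nCoop h - if h i then 1 else 0)) i (h' i) :=
    fun h' => rfl
  rw [Finset.sum_congr rfl fun h' _ => hrw h']
  refine Eq.trans (sum_pi_bool (ι := Fin n)
    (fun i b => if b then (strat i).cond (h i) (nCoop h - if h i then 1 else 0)
      else 1 - (strat i).cond (h i) (nCoop h - if h i then 1 else 0))) ?_
  refine Finset.prod_eq_one fun i _ => by simp



lemma fullInit_nonneg (n : ℕ) (strat : Fin n → Mem1) (h : FullState n) :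
    0 ≤ fullInit strat h :=
  Finset.prod_nonneg fun i _ => abs_nonneg _

lemma fullInit_sum (n : ℕ) (strat : Fin n → Mem1) (hv : ∀ i, (strat i).valid) :
    ∑ h : FullState n, fullInit strat h = 1 := by
  refine Eq.trans (sum_pi_bool (ι := Fin n)
    (fun i b => |1 - (if b then (1:ℝ) else 0) - (strat i).init|)) ?_
  refine Finset.prod_eq_one fun i _ => ?_
  have h1 := (hv i).1
  simp only [Set.mem_Icc] at h1
  rw [abs_fac h1.1 h1.2 true, abs_fac h1.1 h1.2 false]
  simp

lemma mass (n : ℕ) (strat : Fin n → Mem1) (hv : ∀ i, (strat i).valid) (t : ℕ) :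
    (∀ h, 0 ≤ (fullInit strat ᵥ* (fullM strat) ^ t) h)
    ∧ (∑ h : FullState n, (fullInit strat ᵥ* (fullM strat) ^ t) h = 1) := by
  induction t with
  | zero =>
    rw [pow_zero]
    constructor
    · intro h; rw [Matrix.vecMul_one]; exact fullInit_nonneg n strat h
    · rw [Matrix.vecMul_one]; exact fullInit_sum n strat hv
  | succ t ih =>
    rw [pow_succ, ← Matrix.vecMul_vecMul]
    set w := fullInit strat ᵥ* (fullM strat) ^ t with hw
    have hent : ∀ h' : FullState n, (w ᵥ* fullM strat) h'
        = ∑ h : FullState n, w h * fullM strat h h' := fun h' => rfl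
    constructor
    · intro h'
      rw [hent h']
      exact Finset.sum_nonneg fun h _ =>
        mul_nonneg (ih.1 h) (fullM_nonneg n strat hv h h')
    · rw [Finset.sum_congr rfl fun h' _ => hent h', Finset.sum_comm]
      rw [Finset.sum_congr rfl fun h (_ : h ∈ univ) =>
        (by rw [← Finset.mul_sum, fullM_rowsum n strat h, mul_one] :
          ∑ h' : FullState n, w h * fullM strat h h' = w h)]
      exact ih.2


/-- The discounted mean distribution of the reduced chain aggregates
the discounted mean distribution of the full chain over each cluster. -/
theorem state_clustering_discounted (n k : ℕ) (hn : 2 ≤ n) (hk : k ≤ n - 1)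
    (p q : Mem1) (hp : p.valid) (hq : q.valid)
    (focal : Fin n) (hfocal : (focal : ℕ) = 0)
    (assign : Fin n → Bool) (hassign : assign focal = true)
    (hcard : (Finset.univ.filter fun i => i ≠ focal ∧ assign i = true).card = k)
    (δ : ℝ) (hδ0 : 0 < δ) (hδ1 : δ < 1) :
    ∀ (A : Bool) (x : Fin (k+1)) (y : Fin (n-k)),
      discMean δ (redInit n k p q) (redM n k p q) (A, x, y)
        = ∑ h ∈ cluster focal assign A (x:ℕ) (y:ℕ),
            discMean δ (fullInit (strat2 p q assign)) (fullM (strat2 p q assign)) h := by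
  intro A x y
  classical
  have hvalid : ∀ i, (strat2 p q assign i).valid := by
    intro i
    by_cases hb : assign i = true <;> simp [strat2, hb, hp, hq]
  have hbound : ∀ (t : ℕ) (h : FullState n),
      (fullInit (strat2 p q assign) ᵥ* (fullM (strat2 p q assign)) ^ t) h ≤ 1 := by
    intro t h
    have h2 := (mass n (strat2 p q assign) hvalid t).2
    calc (fullInit (strat2 p q assign) ᵥ* (fullM (strat2 p q assign)) ^ t) h
        ≤ ∑ h' : FullState n, (fullInit (strat2 p q assign) ᵥ* (fullM (strat2 p q assign)) ^ t) h' :=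
          Finset.single_le_sum (fun h' _ => (mass n (strat2 p q assign) hvalid t).1 h')
            (mem_univ h)
      _ = 1 := h2
  have hsummable : ∀ h : FullState n, Summable (fun t : ℕ =>
      δ ^ t * (fullInit (strat2 p q assign) ᵥ* (fullM (strat2 p q assign)) ^ t) h) := by
    intro h
    refine Summable.of_nonneg_of_le
      (fun t => mul_nonneg (pow_nonneg hδ0.le t) ((mass n (strat2 p q assign) hvalid t).1 h))
      (fun t => ?_) (summable_geometric_of_lt_one hδ0.le hδ1)
    calc δ ^ t * (fullInit (strat2 p q assign) ᵥ* (fullM (strat2 p q assign)) ^ t) h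
        ≤ δ ^ t * 1 := mul_le_mul_of_nonneg_left (hbound t h) (pow_nonneg hδ0.le t)
      _ = δ ^ t := mul_one _
  unfold discMean
  rw [tsum_congr (fun t => by
    rw [agg_pow n k hn hk p q hp hq focal assign hassign hcard t (A, x, y), Finset.mul_sum])]
  rw [Summable.tsum_finsetSum (fun h _ => hsummable h), Finset.mul_sum]
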